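/- Let μ, ν, ρ be finite sets with product distribution P = P_μ ⊗ P_ρ ⊗ P_ν, and let x, y, a, b be defined by functions as in the Bell causal structure with all of x, y, a, b valued in {+1, −1}. For ξ, υ ∈ Fin 2, write ⟨ab | ξ υ⟩ for the conditional expectation of the product a·b given x = ξ, y = υ (assuming each conditioning event has positive probability, with x, y relabeled to Fin 2). Then the CHSH quantity S = ⟨ab|00⟩ + ⟨ab|01⟩ + ⟨ab|10⟩ − ⟨ab|11⟩ satisfies |S| ≤ 2. -/

import Mathlib

/-- The conditional two-point correlator `⟨ab | ξ υ⟩` in the Bell causal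
structure. -/
noncomputable def chshCorr {μ ρ ν : Type*} [Fintype μ] [Fintype ρ] [Fintype ν]
    (Pμ : μ → ℝ) (Pρ : ρ → ℝ) (Pν : ν → ℝ)
    (f_x : μ → Fin 2) (f_y : ν → Fin 2)
    (f_a f_b : Fin 2 × ρ → ℝ) (ξ υ : Fin 2) : ℝ :=
  (∑ t ∈ Finset.univ.filter
      (fun t : μ × ρ × ν => f_x t.1 = ξ ∧ f_y t.2.2 = υ),
      Pμ t.1 * Pρ t.2.1 * Pν t.2.2 * (f_a (ξ, t.2.1) * f_b (υ, t.2.1))) /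
  (∑ t ∈ Finset.univ.filter
      (fun t : μ × ρ × ν => f_x t.1 = ξ ∧ f_y t.2.2 = υ),
      Pμ t.1 * Pρ t.2.1 * Pν t.2.2)


lemma corr_eq {μ ρ ν : Type*} [Fintype μ] [Fintype ρ] [Fintype ν]
    (Pμ : μ → ℝ) (Pρ : ρ → ℝ) (Pν : ν → ℝ)
    (hρ1 : ∑ x, Pρ x = 1)
    (f_x : μ → Fin 2) (f_y : ν → Fin 2)
    (f_a f_b : Fin 2 × ρ → ℝ) (ξ υ : Fin 2)
    (hpos : 0 < ∑ t ∈ Finset.univ.filter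
          (fun t : μ × ρ × ν => f_x t.1 = ξ ∧ f_y t.2.2 = υ),
          Pμ t.1 * Pρ t.2.1 * Pν t.2.2) :
    (∑ t ∈ Finset.univ.filter
      (fun t : μ × ρ × ν => f_x t.1 = ξ ∧ f_y t.2.2 = υ),
      Pμ t.1 * Pρ t.2.1 * Pν t.2.2 * (f_a (ξ, t.2.1) * f_b (υ, t.2.1))) /
  (∑ t ∈ Finset.univ.filter
      (fun t : μ × ρ × ν => f_x t.1 = ξ ∧ f_y t.2.2 = υ),
      Pμ t.1 * Pρ t.2.1 * Pν t.2.2)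
    = ∑ r, Pρ r * (f_a (ξ, r) * f_b (υ, r)) := by
  set A := Finset.univ.filter (fun m => f_x m = ξ) with hA
  set B := Finset.univ.filter (fun n => f_y n = υ) with hB
  have hset : Finset.univ.filter
      (fun t : μ × ρ × ν => f_x t.1 = ξ ∧ f_y t.2.2 = υ)
      = A ×ˢ (Finset.univ ×ˢ B) := by
    ext t; simp [hA, hB]
  have key : ∀ g : ρ → ℝ,
      (∑ t ∈ Finset.univ.filter
        (fun t : μ × ρ × ν => f_x t.1 = ξ ∧ f_y t.2.2 = υ),
        Pμ t.1 * Pρ t.2.1 * Pν t.2.2 * g t.2.1)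
      = (∑ m ∈ A, Pμ m) * (∑ n ∈ B, Pν n) * (∑ r, Pρ r * g r) := by
    intro g
    rw [hset, Finset.sum_product]
    simp_rw [Finset.sum_product, Finset.mul_sum, Finset.sum_mul]
    rw [Finset.sum_comm]
    congr 1; ext m
    rw [Finset.sum_comm]
    congr 1; ext r
    congr 1; ext n
    ring
  have h1 := key (fun r => f_a (ξ, r) * f_b (υ, r))
  have h2 := key (fun _ => 1)
  simp only [mul_one] at h2
  rw [hρ1, mul_one] at h2
  have hden : (0:ℝ) < (∑ m ∈ A, Pμ m) * (∑ n ∈ B, Pν n) := h2 ▸ hpos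
  rw [h1, h2, mul_comm]
  exact mul_div_cancel_right₀ _ hden.ne'

/-- any Bell-structure functional causal model satisfies the
CHSH inequality `|S| ≤ 2`. -/
theorem bell_chsh
    {μ ρ ν : Type*} [Fintype μ] [Fintype ρ] [Fintype ν]
    (Pμ : μ → ℝ) (Pρ : ρ → ℝ) (Pν : ν → ℝ)
    (hμ0 : ∀ x, 0 ≤ Pμ x) (hμ1 : ∑ x, Pμ x = 1)
    (hρ0 : ∀ x, 0 ≤ Pρ x) (hρ1 : ∑ x, Pρ x = 1)
    (hν0 : ∀ x, 0 ≤ Pν x) (hν1 : ∑ x, Pν x = 1)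
    (f_x : μ → Fin 2) (f_y : ν → Fin 2)
    (f_a f_b : Fin 2 × ρ → ℝ)
    (ha : ∀ p, f_a p = 1 ∨ f_a p = -1)
    (hb : ∀ p, f_b p = 1 ∨ f_b p = -1)
    (hpos : ∀ ξ υ : Fin 2,
      0 < ∑ t ∈ Finset.univ.filter
          (fun t : μ × ρ × ν => f_x t.1 = ξ ∧ f_y t.2.2 = υ),
          Pμ t.1 * Pρ t.2.1 * Pν t.2.2) :
    |chshCorr Pμ Pρ Pν f_x f_y f_a f_b 0 0
      + chshCorr Pμ Pρ Pν f_x f_y f_a f_b 0 1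
      + chshCorr Pμ Pρ Pν f_x f_y f_a f_b 1 0
      - chshCorr Pμ Pρ Pν f_x f_y f_a f_b 1 1| ≤ 2 := by
  simp only [chshCorr]
  rw [corr_eq Pμ Pρ Pν hρ1 f_x f_y f_a f_b 0 0 (hpos 0 0),
      corr_eq Pμ Pρ Pν hρ1 f_x f_y f_a f_b 0 1 (hpos 0 1),
      corr_eq Pμ Pρ Pν hρ1 f_x f_y f_a f_b 1 0 (hpos 1 0),
      corr_eq Pμ Pρ Pν hρ1 f_x f_y f_a f_b 1 1 (hpos 1 1)]
  rw [← Finset.sum_add_distrib, ← Finset.sum_add_distrib, ← Finset.sum_sub_distrib]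
  calc |∑ r : ρ, (Pρ r * (f_a (0, r) * f_b (0, r)) + Pρ r * (f_a (0, r) * f_b (1, r))
        + Pρ r * (f_a (1, r) * f_b (0, r)) - Pρ r * (f_a (1, r) * f_b (1, r)))|
      ≤ ∑ r : ρ, |Pρ r * (f_a (0, r) * f_b (0, r)) + Pρ r * (f_a (0, r) * f_b (1, r))
        + Pρ r * (f_a (1, r) * f_b (0, r)) - Pρ r * (f_a (1, r) * f_b (1, r))| :=
        Finset.abs_sum_le_sum_abs _ _
    _ ≤ ∑ r : ρ, 2 * Pρ r := by
        apply Finset.sum_le_sum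
        intro r _
        have e : Pρ r * (f_a (0, r) * f_b (0, r)) + Pρ r * (f_a (0, r) * f_b (1, r))
            + Pρ r * (f_a (1, r) * f_b (0, r)) - Pρ r * (f_a (1, r) * f_b (1, r))
            = Pρ r * (f_a (0, r) * (f_b (0, r) + f_b (1, r))
              + f_a (1, r) * (f_b (0, r) - f_b (1, r))) := by ring
        rw [e, abs_mul, abs_of_nonneg (hρ0 r), mul_comm]
        apply mul_le_mul_of_nonneg_right _ (hρ0 r)
        rcases ha (0, r) with h1 | h1 <;> rcases ha (1, r) with h2 | h2 <;>
          rcases hb (0, r) with h3 | h3 <;> rcases hb (1, r) with h4 | h4 <;>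
          rw [h1, h2, h3, h4] <;> norm_num
    _ = 2 := by rw [← Finset.mul_sum, hρ1, mul_one]
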